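/- Let C be an even cycle with vertices c_1,...,c_{2k} in a graph G carrying a decomposition weighting a: V → ℝ (edges classified by sign of the endpoint weight sum). Suppose C contains exactly one positive edge e_i = (c_i, c_{i+1}) and exactly one negative edge e_j = (c_j, c_{j+1}), and all other edges of C are zero edges. Then i ≡ j (mod 2). -/

import Mathlib

/-- Along a chain of zero edges, the weights alternate in sign. -/
lemma chain_alt {V : Type*} {n : ℕ} (a : V → ℝ) (c : ZMod n → V) (p : ZMod n) (d : ℕ)
    (h : ∀ s : ℕ, s < d → a (c (p + s)) + a (c (p + s + 1)) = 0) :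
    a (c (p + d)) = (-1 : ℝ) ^ d * a (c p) := by
  induction d with
  | zero => simp
  | succ d ih =>
    have h0 : ∀ s : ℕ, s < d → a (c (p + s)) + a (c (p + s + 1)) = 0 :=
      fun s hs => h s (by omega)
    have hd := h d (by omega)
    have hcast : (p + (↑(d + 1) : ZMod n)) = p + (d : ZMod n) + 1 := by
      push_cast; ring
    rw [hcast, pow_succ]
    have := ih h0
    nlinarith [this, hd]

/-- an even cycle with exactly one positive edge, exactly one negative
edge, and all other edges zero, has its positive and negative edges at positions of
the same parity. -/
theorem stmt18 {V : Type*} (G : SimpleGraph V) (a : V → ℝ) (k : ℕ) (hk : 0 < k)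
    (c : ZMod (2 * k) → V) (hinj : Function.Injective c)
    (hadj : ∀ t, G.Adj (c t) (c (t + 1)))
    (i j : ZMod (2 * k)) (hij : i ≠ j)
    (hpos : 0 < a (c i) + a (c (i + 1)))
    (hneg : a (c j) + a (c (j + 1)) < 0)
    (hzero : ∀ t, t ≠ i → t ≠ j → a (c t) + a (c (t + 1)) = 0) :
    i.val % 2 = j.val % 2 := by
  haveI : NeZero (2 * k) := ⟨by omega⟩
  obtain ⟨m, hmlt, Hm⟩ : ∃ m : ℕ, m < 2 * k ∧ i + 1 + (m : ZMod (2 * k)) = j :=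
    ⟨(j - (i + 1)).val, ZMod.val_lt _, by rw [ZMod.natCast_val, ZMod.cast_id]; ring⟩
  obtain ⟨n, hnlt, Hn⟩ : ∃ n : ℕ, n < 2 * k ∧ j + 1 + (n : ZMod (2 * k)) = i :=
    ⟨(i - (j + 1)).val, ZMod.val_lt _, by rw [ZMod.natCast_val, ZMod.cast_id]; ring⟩
  have Hmn : (2 * k : ℕ) ∣ m + n + 2 := by
    have h0 : (i + 1 + (m : ZMod (2 * k))) + 1 + (n : ZMod (2 * k)) = i := by rw [Hm, Hn]
    have h1 : ((m + n + 2 : ℕ) : ZMod (2 * k)) = 0 := by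
      push_cast
      linear_combination h0
    exact (ZMod.natCast_eq_zero_iff _ _).mp h1
  -- chain from i+1 to j
  have A1 : a (c j) = (-1 : ℝ) ^ m * a (c (i + 1)) := by
    have := chain_alt a c (i + 1) m ?_
    · rwa [Hm] at this
    · intro s hs
      apply hzero
      · intro hcon
        have h1 : ((s + 1 : ℕ) : ZMod (2 * k)) = 0 := by
          push_cast
          linear_combination hcon
        have hdvd : 2 * k ∣ s + 1 := (ZMod.natCast_eq_zero_iff _ _).mp h1
        have := Nat.le_of_dvd (by omega) hdvd
        omega
      · intro hcon
        rw [← Hm] at hcon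
        have h1 : ((s : ℕ) : ZMod (2 * k)) = ((m : ℕ) : ZMod (2 * k)) := by
          linear_combination hcon
        have h2 : s % (2 * k) = m % (2 * k) := (ZMod.natCast_eq_natCast_iff _ _ _).mp h1
        rw [Nat.mod_eq_of_lt (by omega), Nat.mod_eq_of_lt hmlt] at h2
        omega
  -- chain from j+1 to i
  have A2 : a (c i) = (-1 : ℝ) ^ n * a (c (j + 1)) := by
    have := chain_alt a c (j + 1) n ?_
    · rwa [Hn] at this
    · intro s hs
      apply hzero
      · intro hcon
        rw [← Hn] at hcon
        have h1 : ((s : ℕ) : ZMod (2 * k)) = ((n : ℕ) : ZMod (2 * k)) := by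
          linear_combination hcon
        have h2 : s % (2 * k) = n % (2 * k) := (ZMod.natCast_eq_natCast_iff _ _ _).mp h1
        rw [Nat.mod_eq_of_lt (by omega), Nat.mod_eq_of_lt hnlt] at h2
        omega
      · intro hcon
        have h1 : ((s + 1 : ℕ) : ZMod (2 * k)) = 0 := by
          push_cast
          linear_combination hcon
        have hdvd : 2 * k ∣ s + 1 := (ZMod.natCast_eq_zero_iff _ _).mp h1
        have := Nat.le_of_dvd (by omega) hdvd
        omega
  -- m must be odd
  have hmodd : ¬ Even m := by
    intro hme
    have hne : Even n := by
      obtain ⟨t, ht⟩ := (dvd_mul_right 2 k).trans Hmn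
      obtain ⟨u, hu⟩ := hme
      exact ⟨t - u - 1, by omega⟩
    rw [hme.neg_one_pow, one_mul] at A1
    rw [hne.neg_one_pow, one_mul] at A2
    linarith
  have hmo : Odd m := Nat.not_even_iff_odd.mp hmodd
  -- parity conclusion
  have hjval : ((i.val + 1 + m : ℕ) : ZMod (2 * k)) = ((j.val : ℕ) : ZMod (2 * k)) := by
    push_cast
    rw [ZMod.natCast_val, ZMod.cast_id, ZMod.natCast_val, ZMod.cast_id]
    linear_combination Hm
  have hmod : (i.val + 1 + m) % (2 * k) = j.val % (2 * k) :=
    (ZMod.natCast_eq_natCast_iff _ _ _).mp hjval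
  have hmod2 : (i.val + 1 + m) % 2 = j.val % 2 :=
    Nat.ModEq.of_dvd ⟨k, rfl⟩ hmod
  obtain ⟨t, ht⟩ := hmo
  omega
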